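/- Let n ≥ 3 and let δ be a permutation of Z/nZ with δ(0) = 0 and δ^{-1}(-k) = -δ(k) for all k, such that δ has order 2. Suppose there exist a, b in Z/nZ with either (δ(k+1) = δ^b(k) + a and δ(k) + 1 = δ^a(k + b) for all k) or (δ(k+1) = δ^b(-k) + a and δ(k) + 1 = δ^a(-k + b) for all k), where a = δ(1). If a is even, then δ(k) is even for all k, a contradiction to δ being a bijection; hence δ(1) must be odd. -/

import Mathlib

theorem stmt_13 (n : ℕ) (hn : 3 ≤ n) (δ : Equiv.Perm (ZMod n))
    (h0 : δ 0 = 0) (hanti : ∀ k : ZMod n, δ⁻¹ (-k) = -(δ k))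
    (hord : orderOf δ = 2) (b : ZMod n)
    (heq :
      (∀ k : ZMod n,
        δ (k + 1) = (δ ^ b.val) k + δ 1 ∧
        δ k + 1 = (δ ^ (δ 1).val) (k + b)) ∨
      (∀ k : ZMod n,
        δ (k + 1) = (δ ^ b.val) (-k) + δ 1 ∧
        δ k + 1 = (δ ^ (δ 1).val) (-k + b))) :
    Odd (δ 1).val := by
  haveI : NeZero n := ⟨by omega⟩
  by_contra hodd
  have heven : 2 ∣ (δ 1).val := (Nat.not_odd_iff_even.mp hodd).two_dvd
  have hpow : δ ^ (δ 1).val = 1 := by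
    rw [← hord] at heven
    exact orderOf_dvd_iff_pow_eq_one.mp heven
  have h2ne : (2 : ZMod n) ≠ 0 := by
    have : ((2 : ℕ) : ZMod n) ≠ 0 := by
      rw [Ne, ZMod.natCast_eq_zero_iff]
      exact fun hd => absurd (Nat.le_of_dvd (by norm_num) hd) (by omega)
    simpa using this
  rcases heq with h | h
  · -- δ k + 1 = k + b, so δ = id
    have hb : b = 1 := by
      have := (h 0).2
      rw [hpow, h0] at this
      simpa using this.symm
    have hid : ∀ k : ZMod n, δ k = k := by
      intro k
      have := (h k).2
      rw [hpow, hb] at this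
      simpa using this
    have : δ = 1 := Equiv.ext hid
    rw [this, orderOf_one] at hord
    omega
  · -- δ k + 1 = -k + b, so δ = -id
    have hb : b = 1 := by
      have := (h 0).2
      rw [hpow, h0] at this
      simpa using this.symm
    have hneg : ∀ k : ZMod n, δ k = -k := by
      intro k
      have := (h k).2
      rw [hpow, hb] at this
      simp only [Equiv.Perm.one_apply] at this
      linear_combination this
    have hb1 : b.val = 1 := by
      rw [hb, ZMod.val_one_eq_one_mod, Nat.mod_eq_of_lt (by omega)]
    have := (h 1).1
    rw [hb1, pow_one, hneg (1 + 1), hneg (-1), hneg 1] at this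
    simp only [neg_neg] at this
    apply h2ne
    linear_combination -this
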